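/- There is no constant C > 0 such that for all (t, x) ∈ (0,1)×(0,1) the inequality t(1 - log(x²))/(1 + t²(1 - log(x²))) ≤ C^{1/2}/(t·|log(t²)|) holds. -/
import Mathlib


theorem not_good_metric_two_divisors :
    ¬ ∃ C : ℝ, 0 < C ∧ ∀ t x : ℝ, t ∈ Set.Ioo (0:ℝ) 1 → x ∈ Set.Ioo (0:ℝ) 1 →
      t * (1 - Real.log (x ^ 2)) / (1 + t ^ 2 * (1 - Real.log (x ^ 2))) ≤
        Real.sqrt C / (t * |Real.log (t ^ 2)|) := by
  rintro ⟨C, hC, h⟩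
  set s := Real.sqrt C with hs
  have hs0 : 0 ≤ s := Real.sqrt_nonneg C
  set t := Real.exp (-(s + 1)) with ht
  have ht0 : 0 < t := Real.exp_pos _
  have ht1 : t < 1 := by
    rw [ht, Real.exp_lt_one_iff]; linarith
  set x := Real.exp ((1 - 1 / t ^ 2) / 2) with hx
  have hx0 : 0 < x := Real.exp_pos _
  have hx1 : x < 1 := by
    rw [hx, Real.exp_lt_one_iff]
    have h2 : (1 : ℝ) < 1 / t ^ 2 := by
      rw [lt_div_iff₀ (by positivity)]
      nlinarith
    linarith
  have hlogx : Real.log (x ^ 2) = 1 - 1 / t ^ 2 := by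
    rw [Real.log_pow, hx, Real.log_exp]; push_cast; ring
  have hlogt : Real.log (t ^ 2) = -2 * (s + 1) := by
    rw [Real.log_pow, ht, Real.log_exp]; push_cast; ring
  have key := h t x ⟨ht0, ht1⟩ ⟨hx0, hx1⟩
  rw [hlogx, hlogt] at key
  have habs : |(-2 * (s + 1))| = 2 * (s + 1) := by
    rw [abs_of_nonpos (by linarith)]; ring
  rw [habs] at key
  have e1 : t * (1 - (1 - 1 / t ^ 2)) / (1 + t ^ 2 * (1 - (1 - 1 / t ^ 2)))
      = 1 / (2 * t) := by
    field_simp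
    ring
  rw [e1, div_le_div_iff₀ (by positivity) (by positivity)] at key
  nlinarith
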